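/- Let m and n be coprime positive integers, and let f, g : ℝ/ℤ → ℝ be functions (thought of as functions on the unit circle via x ↦ e^{2πix}). Suppose there exists a nonzero integer k such that f(k·x) = g(m·x) − g(n·x) for all x ∈ ℝ/ℤ. Then f satisfies the Cooper (m,n)-signature condition: for all positive integers p, c with gcd(m,p) = gcd(n,p) = gcd(c,p) = 1, letting m̄ denote an inverse of m mod p and r the multiplicative order of n·m̄ in (ℤ/pℤ)ˣ, we have ∑_{ℓ=1}^{r} f(c·(n·m̄)^ℓ / p mod 1) = 0. -/

import Mathlib

private lemma coe_eq_coe_of_int (x y : ℝ) (h : ∃ z : ℤ, x - y = z) :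
    (x : AddCircle (1:ℝ)) = y := by
  obtain ⟨z, hz⟩ := h
  have : x - y ∈ AddSubgroup.zmultiples (1:ℝ) := ⟨z, by simp [hz]⟩
  exact (QuotientAddGroup.eq_iff_sub_mem.mpr this)

private lemma exists_split (p : ℕ) : ∀ K : ℕ, 0 < K →
    ∃ t B : ℕ, 0 < B ∧ Nat.Coprime B p ∧ K ∣ p ^ t * B := by
  intro K
  induction K using Nat.strong_induction_on with
  | _ K ih =>
    intro hK
    by_cases h : Nat.gcd K p = 1
    · exact ⟨0, K, hK, h, by simp⟩
    · have hg0 : 0 < Nat.gcd K p := Nat.gcd_pos_of_pos_left _ hK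
      have hg : 1 < Nat.gcd K p := by omega
      have hgd : Nat.gcd K p ∣ K := Nat.gcd_dvd_left _ _
      have hlt : K / Nat.gcd K p < K := Nat.div_lt_self hK hg
      have hpos : 0 < K / Nat.gcd K p := Nat.div_pos (Nat.le_of_dvd hK hgd) (by omega)
      obtain ⟨t, B, hB, hBp, hdvd⟩ := ih _ hlt hpos
      refine ⟨t + 1, B, hB, hBp, ?_⟩
      calc K = Nat.gcd K p * (K / Nat.gcd K p) := (Nat.mul_div_cancel' hgd).symm
        _ ∣ p * (p ^ t * B) := mul_dvd_mul (Nat.gcd_dvd_right _ _) hdvd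
        _ = p ^ (t+1) * B := by ring

private lemma sum_period (F : ℕ → ℝ) (r : ℕ) (hF : ∀ ℓ, F (ℓ + r) = F ℓ) (q : ℕ) :
    ∑ ℓ ∈ Finset.Ioc 0 (q * r), F ℓ = q • ∑ ℓ ∈ Finset.Ioc 0 r, F ℓ := by
  have hiter : ∀ j i, F (i + j * r) = F i := by
    intro j; induction j with
    | zero => simp
    | succ j ihj => intro i
                    have : i + (j+1) * r = (i + j * r) + r := by ring
                    rw [this, hF, ihj]
  induction q with
  | zero => simp
  | succ q ih =>
    have h1 : (q + 1) * r = q * r + r := by ring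
    rw [h1, ← Finset.sum_Ioc_consecutive _ (Nat.zero_le _) (Nat.le_add_right _ _), ih]
    have h0 : Finset.Ioc (q*r) (q*r + r) = Finset.Ioc (q*r + 0) (q*r + r) := by norm_num
    have h2 : ∑ ℓ ∈ Finset.Ioc (q*r) (q*r + r), F ℓ = ∑ ℓ ∈ Finset.Ioc 0 r, F ℓ := by
      rw [h0, ← Finset.map_add_left_Ioc, Finset.sum_map]
      simp only [addLeftEmbedding_apply]
      refine Finset.sum_congr rfl fun i _ => ?_
      rw [add_comm (q*r) i, hiter]
    rw [h2, succ_nsmul]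

private lemma sum_shift (R : ℕ) (hR : 0 < R) (G : ℕ → ℝ) :
    ∑ ℓ ∈ Finset.Ioc 0 R, G (if ℓ = R then 1 else ℓ + 1) = ∑ ℓ ∈ Finset.Ioc 0 R, G ℓ := by
  refine Finset.sum_nbij' (fun ℓ => if ℓ = R then 1 else ℓ + 1)
    (fun ℓ => if ℓ = 1 then R else ℓ - 1) ?_ ?_ ?_ ?_ ?_
  · intro a ha; simp only [Finset.mem_Ioc] at *; split_ifs <;> omega
  · intro a ha; simp only [Finset.mem_Ioc] at *; split_ifs <;> omega
  · intro a ha; simp only [Finset.mem_Ioc] at ha; split_ifs <;> omega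
  · intro a ha; simp only [Finset.mem_Ioc] at ha; split_ifs <;> omega
  · intro a ha; rfl

private lemma circ_div (D : ℤ) (w : ℝ) (hw : w ≠ 0) (h : ∃ z : ℤ, (D:ℝ) = w * z) (x y : ℝ)
    (hxy : x - y = (D:ℝ)/w) : (x : AddCircle (1:ℝ)) = y := by
  apply coe_eq_coe_of_int
  obtain ⟨z, hz⟩ := h
  exact ⟨z, by rw [hxy, hz]; field_simp⟩

theorem stmt_0 (m n : ℕ) (hm : 0 < m) (hn : 0 < n) (hmn : Nat.Coprime m n)
    (f g : AddCircle (1 : ℝ) → ℝ)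
    (hfg : ∃ k : ℤ, k ≠ 0 ∧ ∀ x : AddCircle (1 : ℝ),
      f (k • x) = g ((m : ℤ) • x) - g ((n : ℤ) • x)) :
    ∀ p c : ℕ, 0 < p → 0 < c →
      Nat.gcd m p = 1 → Nat.gcd n p = 1 → Nat.gcd c p = 1 →
      ∀ mbar : ℕ, m * mbar ≡ 1 [MOD p] →
      ∑ ℓ ∈ Finset.Icc 1 (orderOf ((n * mbar : ℕ) : ZMod p)),
        f ((((c * (n * mbar) ^ ℓ : ℕ) : ℝ) / (p : ℝ) : ℝ) : AddCircle (1 : ℝ)) = 0 := by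
  obtain ⟨k, hk, hfgk⟩ := hfg
  intro p c hp hc hmp hnp hcp mbar hmbar
  haveI : NeZero p := ⟨hp.ne'⟩
  set r := orderOf ((n * mbar : ℕ) : ZMod p) with hrdef
  obtain ⟨t, B, hBpos, hBp, hKdvd⟩ := exists_split p k.natAbs (Int.natAbs_pos.mpr hk)
  set A := p ^ (t+1) with hAdef
  have hApos : 0 < A := pow_pos hp _
  haveI : NeZero A := ⟨hApos.ne'⟩
  have hpA : p ∣ A := dvd_pow_self p (Nat.succ_ne_zero t)
  have hKpAB : k.natAbs * p ∣ A * B := by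
    calc k.natAbs * p ∣ (p ^ t * B) * p := Nat.mul_dvd_mul_right hKdvd p
      _ = A * B := by rw [hAdef]; ring
  -- coprimality
  have hmA : Nat.Coprime m A := Nat.Coprime.pow_right _ hmp
  have hnA : Nat.Coprime n A := Nat.Coprime.pow_right _ hnp
  have hBA : Nat.Coprime B A := Nat.Coprime.pow_right _ hBp
  have hmBA : Nat.Coprime (m * B) A := Nat.Coprime.mul hmA hBA
  obtain ⟨u, v, huv⟩ := (Nat.isCoprime_iff_coprime.mpr hmBA)
  set M : ℤ := B * u with hMdef
  have hmM : (A:ℤ) ∣ (m:ℤ) * M - 1 := ⟨-v, by push_cast at huv ⊢; linear_combination huv⟩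
  have hBM : (B:ℤ) ∣ M := ⟨u, rfl⟩
  set N : ℤ := (n:ℤ) * M with hNdef
  have hBN : (B:ℤ) ∣ N := hBM.mul_left _
  -- ZMod A facts
  have hmMA : ((m:ℤ) : ZMod A) * ((M : ℤ) : ZMod A) = 1 := by
    have := (ZMod.intCast_zmod_eq_zero_iff_dvd _ A).mpr hmM
    push_cast at this ⊢
    linear_combination this
  have hNunit : IsUnit ((N : ℤ) : ZMod A) := by
    have h1 : IsUnit ((M : ℤ) : ZMod A) :=
      IsUnit.of_mul_eq_one _ (by rw [mul_comm]; exact hmMA)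
    have h2 : IsUnit ((n : ZMod A)) := (ZMod.isUnit_iff_coprime n A).mpr hnA
    have : ((N:ℤ) : ZMod A) = (n : ZMod A) * ((M:ℤ) : ZMod A) := by push_cast [hNdef]; ring
    rw [this]; exact h2.mul h1
  set R := orderOf ((N : ℤ) : ZMod A) with hRdef
  have hRpos : 0 < R := by
    obtain ⟨w, hw⟩ := hNunit
    rw [hRdef, ← hw, orderOf_units]
    exact orderOf_pos w
  have hNR : ((N:ℤ) : ZMod A) ^ R = 1 := pow_orderOf_eq_one _
  have hNRA : (A:ℤ) ∣ N ^ R - 1 := by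
    have : ((N ^ R - 1 : ℤ) : ZMod A) = 0 := by push_cast [hNR]; ring
    exact (ZMod.intCast_zmod_eq_zero_iff_dvd _ A).mp this
  -- ZMod p facts
  have hpMint : (p:ℤ) ∣ (m:ℤ) * M - 1 := dvd_trans (Int.natCast_dvd_natCast.mpr hpA) hmM
  have hmMp : ((m:ℤ) : ZMod p) * ((M : ℤ) : ZMod p) = 1 := by
    have := (ZMod.intCast_zmod_eq_zero_iff_dvd _ p).mpr hpMint
    push_cast at this ⊢
    linear_combination this
  have hmbarp : ((m:ℤ) : ZMod p) * ((mbar : ℕ) : ZMod p) = 1 := by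
    have : ((m * mbar : ℕ) : ZMod p) = ((1 : ℕ) : ZMod p) :=
      (ZMod.natCast_eq_natCast_iff _ _ _).mpr hmbar
    push_cast at this ⊢
    linear_combination this
  have hMp : ((M : ℤ) : ZMod p) = ((mbar : ℕ) : ZMod p) := by
    calc ((M:ℤ) : ZMod p) = (((m:ℤ):ZMod p) * mbar) * ((M:ℤ):ZMod p) := by
          rw [hmbarp, one_mul]
      _ = ((mbar:ℕ):ZMod p) * (((m:ℤ):ZMod p) * ((M:ℤ):ZMod p)) := by ring
      _ = _ := by rw [hmMp, mul_one]
  have hNp : ((N : ℤ) : ZMod p) = ((n * mbar : ℕ) : ZMod p) := by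
    push_cast [hNdef, hMp]
    push_cast [← hMp]
    ring
  have hrr : r ∣ R := by
    apply orderOf_dvd_of_pow_eq_one
    have hmap := congrArg (ZMod.castHom hpA (ZMod p)) hNR
    rw [map_pow, map_one, map_intCast] at hmap
    rw [← hNp]
    exact hmap
  have hrRq : (R / r) * r = R := Nat.div_mul_cancel hrr
  have hrpos : 0 < r := by
    have hnmunit : IsUnit ((n * mbar : ℕ) : ZMod p) := by
      have h1 : IsUnit ((mbar : ℕ) : ZMod p) :=
        IsUnit.of_mul_eq_one _ (by rw [mul_comm]; push_cast at hmbarp ⊢; exact hmbarp)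
      have h2 : IsUnit ((n : ZMod p)) := (ZMod.isUnit_iff_coprime n p).mpr hnp
      have : ((n * mbar : ℕ) : ZMod p) = (n : ZMod p) * ((mbar:ℕ) : ZMod p) := by push_cast; ring
      rw [this]; exact h2.mul h1
    obtain ⟨w, hw⟩ := hnmunit
    rw [hrdef, ← hw, orderOf_units]
    exact orderOf_pos w
  have hqpos : 0 < R / r := by
    rcases Nat.eq_zero_or_pos (R / r) with h | h
    · exfalso; rw [h, zero_mul] at hrRq; omega
    · exact h
  -- the function and the lifts
  set F : ℕ → ℝ := fun ℓ => f ((((c * (n * mbar) ^ ℓ : ℕ) : ℝ) / (p : ℝ) : ℝ) : AddCircle (1:ℝ))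
    with hFdef
  set X : ℕ → ℝ := fun ℓ => (((c : ℤ) * N ^ ℓ : ℤ) : ℝ) / ((k : ℝ) * (p : ℝ)) with hXdef
  have hkne : (k:ℝ) ≠ 0 := Int.cast_ne_zero.mpr hk
  have hpne : (p:ℝ) ≠ 0 := Nat.cast_ne_zero.mpr hp.ne'
  have hkpne : (k:ℝ) * (p:ℝ) ≠ 0 := mul_ne_zero hkne hpne
  have hkpdvd : ∀ D : ℤ, (A * B : ℤ) ∣ D → ∃ z : ℤ, (D:ℝ) = ((k:ℝ) * (p:ℝ)) * z := by
    intro D hD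
    have h1 : (k * p : ℤ) ∣ D := by
      have : ((k * p : ℤ).natAbs : ℤ) ∣ D := by
        rw [Int.natAbs_mul, Int.natAbs_natCast]
        exact dvd_trans (Int.natCast_dvd_natCast.mpr hKpAB) hD
      exact (Int.natAbs_dvd).mp this
    obtain ⟨z, hz⟩ := h1
    exact ⟨z, by rw [hz]; push_cast; ring⟩
  -- congruence mod p gives equal circle points at denominator p
  have hmodp : ∀ X Y : ℤ, ((X : ZMod p) = (Y : ZMod p)) →
      (((X:ℝ)/(p:ℝ) : ℝ) : AddCircle (1:ℝ)) = (((Y:ℝ)/(p:ℝ) : ℝ) : AddCircle (1:ℝ)) := by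
    intro X Y hXY
    apply coe_eq_coe_of_int
    have : ((X - Y : ℤ) : ZMod p) = 0 := by push_cast [hXY]; ring
    obtain ⟨z, hz⟩ := (ZMod.intCast_zmod_eq_zero_iff_dvd _ p).mp this
    refine ⟨z, ?_⟩
    have : (X:ℝ) - Y = (p:ℝ) * z := by
      have := congrArg (fun w : ℤ => (w:ℝ)) hz
      push_cast at this
      linarith
    field_simp [this]
    exact this
  -- F in terms of k • X ℓ
  have hkX : ∀ ℓ : ℕ, F ℓ = f (k • ((X ℓ : ℝ) : AddCircle (1:ℝ))) := by
    intro ℓ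
    show f _ = f _
    congr 1
    rw [← QuotientAddGroup.mk_zsmul]
    have h1 : k • (X ℓ) = (((c:ℤ) * N ^ ℓ : ℤ) : ℝ) / (p:ℝ) := by
      rw [hXdef]; simp only [zsmul_eq_mul]; field_simp
    rw [h1]
    have h2 : (((c * (n * mbar) ^ ℓ : ℕ) : ℝ)) = (((c * (n * mbar) ^ ℓ : ℕ) : ℤ) : ℝ) := by
      push_cast; ring
    rw [h2]
    refine (hmodp _ _ ?_).symm
    push_cast [hNp]
    push_cast [← hNp]
    ring
  -- telescoping equation
  have htel : ∀ ℓ ∈ Finset.Ioc 0 R, (n:ℤ) • ((X ℓ : ℝ) : AddCircle (1:ℝ)) =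
      (m:ℤ) • ((X (if ℓ = R then 1 else ℓ + 1) : ℝ) : AddCircle (1:ℝ)) := by
    intro ℓ hℓ
    simp only [Finset.mem_Ioc] at hℓ
    rw [← QuotientAddGroup.mk_zsmul, ← QuotientAddGroup.mk_zsmul]
    simp only [zsmul_eq_mul]
    set σ : ℕ := if ℓ = R then 1 else ℓ + 1 with hσ
    set D : ℤ := (n:ℤ) * ((c:ℤ) * N ^ ℓ) - (m:ℤ) * ((c:ℤ) * N ^ σ) with hD
    have hdvd : (A * B : ℤ) ∣ D := by
      by_cases hcase : ℓ = R
      · have hσ1 : σ = 1 := by rw [hσ, if_pos hcase]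
        have hDval : D = (c:ℤ) * (n:ℤ) * (N ^ R - ((m:ℤ) * M)) := by
          rw [hD, hσ1, hcase, hNdef]; ring
        rw [hDval]
        have hA : (A:ℤ) ∣ N ^ R - (m:ℤ) * M := by
          have : N ^ R - (m:ℤ)*M = (N ^ R - 1) - ((m:ℤ)*M - 1) := by ring
          rw [this]; exact dvd_sub hNRA hmM
        have hBd : (B:ℤ) ∣ N ^ R - (m:ℤ) * M := by
          apply dvd_sub
          · calc (B:ℤ) ∣ N := hBN
              _ ∣ N ^ R := dvd_pow_self N hRpos.ne'
          · exact (hBM.mul_left _)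
        have hcop : IsCoprime (A:ℤ) (B:ℤ) := Nat.isCoprime_iff_coprime.mpr hBA.symm
        exact (hcop.mul_dvd hA hBd).mul_left _
      · have hσ1 : σ = ℓ + 1 := by rw [hσ, if_neg hcase]
        have hDval : D = -((c:ℤ) * (n:ℤ) * (N ^ ℓ * ((m:ℤ) * M - 1))) := by
          rw [hD, hσ1, hNdef]; ring
        rw [hDval]
        apply Dvd.dvd.neg_right
        have hAB : (A:ℤ) * B ∣ ((m:ℤ)*M - 1) * N ^ ℓ := by
          apply mul_dvd_mul hmM
          calc (B:ℤ) ∣ N := hBN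
            _ ∣ N ^ ℓ := dvd_pow_self N (by omega)
        calc (A:ℤ) * B ∣ ((m:ℤ)*M - 1) * N ^ ℓ := hAB
          _ ∣ (c:ℤ) * (n:ℤ) * (N ^ ℓ * ((m:ℤ) * M - 1)) := ⟨(c:ℤ)*(n:ℤ), by ring⟩
    apply circ_div D ((k:ℝ)*(p:ℝ)) hkpne (hkpdvd D hdvd)
    rw [hXdef, hD]
    push_cast
    field_simp
  -- periodicity of F with period r
  have hFper : ∀ ℓ, F (ℓ + r) = F ℓ := by
    intro ℓ
    rw [hFdef]
    simp only []
    congr 1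
    have h2 : ∀ w : ℕ, (((c * (n * mbar) ^ w : ℕ) : ℝ)) = (((c * (n * mbar) ^ w : ℕ) : ℤ) : ℝ) := by
      intro w; push_cast; ring
    rw [h2, h2]
    apply hmodp
    have hone : ((n * mbar : ℕ) : ZMod p) ^ r = 1 := pow_orderOf_eq_one _
    push_cast
    rw [pow_add]
    push_cast at hone
    rw [hone]
    ring
  -- the big sum vanishes
  have hbig : ∑ ℓ ∈ Finset.Ioc 0 R, F ℓ = 0 := by
    have hstep : ∀ ℓ ∈ Finset.Ioc 0 R, F ℓ =
        g ((m:ℤ) • ((X ℓ : ℝ) : AddCircle (1:ℝ))) - g ((n:ℤ) • ((X ℓ : ℝ) : AddCircle (1:ℝ))) := by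
      intro ℓ _
      rw [hkX ℓ, hfgk]
    rw [Finset.sum_congr rfl hstep, Finset.sum_sub_distrib]
    have : ∑ ℓ ∈ Finset.Ioc 0 R, g ((n:ℤ) • ((X ℓ : ℝ) : AddCircle (1:ℝ)))
        = ∑ ℓ ∈ Finset.Ioc 0 R, g ((m:ℤ) • ((X ℓ : ℝ) : AddCircle (1:ℝ))) := by
      rw [Finset.sum_congr rfl (fun ℓ hℓ => congrArg g (htel ℓ hℓ))]
      exact sum_shift R hRpos (fun j => g ((m:ℤ) • ((X j : ℝ) : AddCircle (1:ℝ))))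
    rw [this, sub_self]
  -- conclude
  have hfinal : (R / r) • ∑ ℓ ∈ Finset.Ioc 0 r, F ℓ = 0 := by
    rw [← sum_period F r hFper (R / r), hrRq, hbig]
  have : ∑ ℓ ∈ Finset.Ioc 0 r, F ℓ = 0 := by
    rw [nsmul_eq_mul] at hfinal
    rcases mul_eq_zero.mp hfinal with h | h
    · exfalso
      have : ((R / r : ℕ) : ℝ) ≠ 0 := Nat.cast_ne_zero.mpr hqpos.ne'
      exact this h
    · exact h
  rw [show Finset.Icc 1 r = Finset.Ioc 0 r from Finset.Icc_add_one_left_eq_Ioc 0 r]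
  exact this
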